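/- Let H = (V_H, E_H) be a finite simple graph with n = |V_H|, and let w : V_H → ℝ≥0; call a vertex trivial if w(v) = 1 and non-trivial otherwise. Let E_{≠1} ⊆ E_H be the set of edges incident to at least one non-trivial vertex, and call the connected components of H - E_{≠1} clusters. Then: (a) every non-trivial vertex forms a singleton cluster; and (b) defining ℓ(K) = w(u) when a cluster K = {u} consists of a single non-trivial vertex and ℓ(K) = 1 otherwise, for every simple path P in H, if P̂ denotes the sequence of clusters obtained from P by contracting each maximal run of consecutive vertices of P lying in a common cluster to one occurrence of that cluster, then w(P) - n ≤ Σ_{K occurring in P̂} ℓ(K) ≤ w(P), where w(P) = Σ_{v ∈ V(P)} w(v) and the sum over P̂ counts each occurrence. -/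

import Mathlib

open scoped Classical

private lemma destutter'_sum_aux {α : Type*} (ℓ : α → ℝ) :
    ∀ (l : List α) (a : α),
      (∀ b, 2 ≤ (a :: l).count b → ℓ b = 1) →
      ((a :: l).map ℓ).sum + ((List.destutter' (· ≠ ·) a l).length : ℝ) =
        ((List.destutter' (· ≠ ·) a l).map ℓ).sum + ((a :: l).length : ℝ) := by
  intro l
  induction l with
  | nil => intro a h; simp
  | cons b l ih =>
    intro a h
    by_cases hab : a ≠ b
    · rw [List.destutter'_cons, if_pos hab]
      have hh : ∀ c, 2 ≤ (b :: l).count c → ℓ c = 1 := by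
        intro c hc
        exact h c (le_trans hc (by
          rcases eq_or_ne c a with rfl | hca
          · simp [List.count_cons]
          · simp [List.count_cons, hca]))
      have := ih b hh
      simp only [List.map_cons, List.sum_cons, List.length_cons] at *
      push_cast at *
      linarith
    · push_neg at hab
      subst hab
      rw [show List.destutter' (· ≠ ·) a (a :: l) = List.destutter' (· ≠ ·) a l from by
        rw [List.destutter'_cons, if_neg (fun h => h rfl)]]
      have hh : ∀ c, 2 ≤ (a :: l).count c → ℓ c = 1 := by
        intro c hc
        exact h c (le_trans hc (by simp [List.count_cons]))
      have hone : ℓ a = 1 := h a (by simp [List.count_cons])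
      have := ih a hh
      simp only [List.map_cons, List.sum_cons, List.length_cons] at *
      push_cast at *
      linarith

/-- Let `H` be a finite simple graph with `n` vertices and `w : V → ℝ≥0`;
a vertex is trivial if `w v = 1`. Let `E_{≠1}` be the edges incident to some non-trivial
vertex and call the connected components of `H - E_{≠1}` clusters. Then:
(a) every non-trivial vertex is a singleton cluster; and
(b) with `ℓ(K) = w u` for a singleton cluster `K = {u}` of a non-trivial vertex `u` and
`ℓ(K) = 1` for clusters consisting only of trivial vertices, every simple path `P` in `H`
satisfies `w(P) - n ≤ ℓ(P̂) ≤ w(P)`, where `P̂` is the cluster sequence obtained from `P` by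
contracting maximal runs of consecutive vertices lying in a common cluster. -/
theorem stmt_14 {V : Type*} [Fintype V] (H : SimpleGraph V)
    (n : ℕ) (hn : n = Fintype.card V)
    (w : V → ℝ) (hw : ∀ v, 0 ≤ w v)
    (Ene : Set (Sym2 V))
    (hEne : Ene = {e ∈ H.edgeSet | ∃ v ∈ e, w v ≠ 1}) :
    (∀ v : V, w v ≠ 1 → ∀ u : V, (H.deleteEdges Ene).Reachable v u → u = v) ∧
    (∀ ℓ : (H.deleteEdges Ene).ConnectedComponent → ℝ,
      (∀ u : V, w u ≠ 1 → ℓ ((H.deleteEdges Ene).connectedComponentMk u) = w u) →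
      (∀ K : (H.deleteEdges Ene).ConnectedComponent,
        (∀ u : V, (H.deleteEdges Ene).connectedComponentMk u = K → w u = 1) → ℓ K = 1) →
      ∀ (x y : V) (P : H.Walk x y), P.IsPath →
        (P.support.map w).sum - n ≤
          ((((P.support.map (H.deleteEdges Ene).connectedComponentMk)).destutter
            (· ≠ ·)).map ℓ).sum ∧
        ((((P.support.map (H.deleteEdges Ene).connectedComponentMk)).destutter
            (· ≠ ·)).map ℓ).sum ≤ (P.support.map w).sum) := by
  set G := H.deleteEdges Ene with hG
  have parta : ∀ v : V, w v ≠ 1 → ∀ u : V, G.Reachable v u → u = v := by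
    intro v hv u hr
    obtain ⟨p⟩ := hr
    cases p with
    | nil => rfl
    | cons h _ =>
      exfalso
      rw [hG, SimpleGraph.deleteEdges_adj] at h
      exact h.2 (by rw [hEne]; exact ⟨H.mem_edgeSet.2 h.1, v, Sym2.mem_mk_left _ _, hv⟩)
  refine ⟨parta, ?_⟩
  intro ℓ h1 h2 x y P hP
  set c := G.connectedComponentMk with hc
  -- ℓ ∘ c = w
  have hg : ∀ u : V, ℓ (c u) = w u := by
    intro u
    by_cases hu : w u = 1
    · rw [hu]
      refine h2 (c u) ?_
      intro u' hu'
      by_contra hu'1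
      have : u = u' := parta u' hu'1 u ((SimpleGraph.ConnectedComponent.eq).1 hu')
      exact hu'1 (this ▸ hu)
    · exact h1 u hu
  set s := P.support with hs
  set m := s.map c with hm
  have hnodup : s.Nodup := hP.support_nodup
  -- repeated components have ℓ = 1
  have hcount : ∀ K, 2 ≤ m.count K → ℓ K = 1 := by
    intro K hK
    have hsub : List.Sublist (List.replicate 2 K) m := List.replicate_sublist_iff.mpr hK
    obtain ⟨s', hs', hmap⟩ := List.sublist_map_iff.1 hsub
    rcases s' with _ | ⟨u, _ | ⟨u', _ | ⟨z, t⟩⟩⟩ <;>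
      simp [List.replicate_succ] at hmap
    obtain ⟨hcu, hcu'⟩ := hmap
    have hne : u ≠ u' := by
      have := hs'.nodup hnodup
      simp at this
      exact this
    refine h2 K ?_
    intro z hz
    by_contra hz1
    have e1 : u = z := parta z hz1 u ((SimpleGraph.ConnectedComponent.eq).1 (hz.trans hcu))
    have e2 : u' = z := parta z hz1 u' ((SimpleGraph.ConnectedComponent.eq).1 (hz.trans hcu'))
    exact hne (e1.trans e2.symm)
  -- main sum identity
  have hlen : s.length ≤ n := by
    rw [hn]; exact hnodup.length_le_card
  have hmsum : (m.map ℓ).sum = (s.map w).sum := by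
    rw [hm, List.map_map]
    congr 1
    exact List.map_congr_left (fun u _ => hg u)
  obtain ⟨a, t, hcons⟩ : ∃ a t, m = a :: t := by
    rw [hm, hs]
    cases P <;> exact ⟨_, _, rfl⟩
  have key : (m.map ℓ).sum + ((m.destutter (· ≠ ·)).length : ℝ) =
      ((m.destutter (· ≠ ·)).map ℓ).sum + (m.length : ℝ) := by
    rw [hcons, List.destutter_cons']
    exact destutter'_sum_aux ℓ t a (by rw [← hcons]; exact hcount)
  have hdlen : (m.destutter (· ≠ ·)).length ≤ m.length :=
    (List.destutter_sublist _ _).length_le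
  have hmlen : m.length = s.length := by rw [hm, List.length_map]
  constructor
  · have : ((m.destutter (· ≠ ·)).map ℓ).sum = (s.map w).sum +
        ((m.destutter (· ≠ ·)).length : ℝ) - (m.length : ℝ) := by
      rw [← hmsum]; linarith
    rw [this]
    have h1' : (m.length : ℝ) ≤ n := by
      rw [hmlen]; exact_mod_cast hlen
    have h2' : (0 : ℝ) ≤ ((m.destutter (· ≠ ·)).length : ℝ) := by positivity
    linarith
  · have h3' : ((m.destutter (· ≠ ·)).length : ℝ) ≤ (m.length : ℝ) := by exact_mod_cast hdlen
    linarith [hmsum]
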